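/- Let M ∈ SpO_N(R). Then the singular values of M all have multiplicity at least 2: there exist t₁ ≥ … ≥ t_d ≥ 0 (with N = 2d or N = 2d+1) such that the multiset of singular values of M is {e^{t₁}, e^{t₁}, …, e^{t_d}, e^{t_d}, e^{-t₁}, e^{-t₁}, …, e^{-t_d}, e^{-t_d}} together with {1, 1} if N is odd. -/

import Mathlib

open Matrix

noncomputable section

/-! ### Auxiliary combinatorial lemma -/

lemma stmt18_key : ∀ (n : ℕ) (m : Multiset ℝ), Multiset.card m = 2*n →
    (∀ x : ℝ, m.count (-x) = m.count x) →
    (∀ x : ℝ, Even (m.count x)) →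
    ∃ (d : ℕ) (t : Fin d → ℝ), (n = 2*d ∨ n = 2*d+1) ∧ (∀ i, 0 ≤ t i) ∧ Antitone t ∧
      m = ((Finset.univ.val.map t).bind fun a => ({a, a, -a, -a} : Multiset ℝ)) +
        (if n = 2*d+1 then ({0, 0} : Multiset ℝ) else 0) := by
  intro n
  induction n using Nat.strong_induction_on with
  | _ n ih =>
    intro m hcard hneg heven
    rcases Nat.eq_zero_or_pos n with rfl | hn
    · refine ⟨0, Fin.elim0, Or.inl rfl, fun i => i.elim0, fun i _ _ => i.elim0, ?_⟩
      have : m = 0 := Multiset.card_eq_zero.mp (by omega)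
      simp [this]
    · -- m is nonempty
      have hm0 : m ≠ 0 := by
        intro h; rw [h] at hcard; simp at hcard; omega
      have hne : m.toFinset.Nonempty := by
        obtain ⟨a, ha⟩ := Multiset.exists_mem_of_ne_zero hm0
        exact ⟨a, Multiset.mem_toFinset.mpr ha⟩
      set a := m.toFinset.max' hne with hadef
      have ha : a ∈ m := Multiset.mem_toFinset.mp (m.toFinset.max'_mem hne)
      have hmax : ∀ b ∈ m, b ≤ a := fun b hb =>
        m.toFinset.le_max' b (Multiset.mem_toFinset.mpr hb)
      have hmemneg : ∀ x ∈ m, -x ∈ m := by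
        intro x hx
        have : 0 < m.count (-x) := by
          rw [hneg]; exact Multiset.count_pos.mpr hx
        exact Multiset.count_pos.mp this
      have ha0 : 0 ≤ a := by
        have := hmax (-a) (hmemneg a ha); linarith
      rcases eq_or_lt_of_le ha0 with hz | hpos
      · -- all elements are 0
        have hall : ∀ b ∈ m, b = (0:ℝ) := by
          intro b hb
          have h1 := hmax b hb
          have h2 := hmax (-b) (hmemneg b hb)
          rw [← hz] at h1 h2; linarith
        refine ⟨n / 2, fun _ => 0, by omega, fun _ => le_refl _, fun _ _ _ => le_refl _, ?_⟩
        have hm : m = Multiset.replicate (2*n) (0:ℝ) := by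
          rw [← hcard]; exact Multiset.eq_replicate_card.mpr hall
        rw [hm]
        symm
        rw [Multiset.eq_replicate]
        constructor
        · rw [Multiset.card_add, Multiset.card_bind, Multiset.map_map]
          have h4 : ((Multiset.card ∘ fun a : ℝ => ({a, a, -a, -a} : Multiset ℝ)) ∘
              fun _ : Fin (n/2) => (0:ℝ)) = fun _ => 4 := by
            funext x; simp [Multiset.insert_eq_cons]
          rw [h4, Multiset.map_const', Multiset.sum_replicate]
          have hcu : Multiset.card (Finset.univ.val : Multiset (Fin (n/2))) = n / 2 := by simp
          rw [hcu]
          split_ifs <;> simp <;> omega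
        · intro b hb
          rcases Multiset.mem_add.mp hb with h | h
          · obtain ⟨c, hc, hbc⟩ := Multiset.mem_bind.mp h
            obtain ⟨i, _, rfl⟩ := Multiset.mem_map.mp hc
            simp only [Multiset.insert_eq_cons, Multiset.mem_cons, Multiset.mem_singleton] at hbc
            rcases hbc with rfl|rfl|rfl|rfl <;> simp
          · split_ifs at h with hcond
            · simp only [Multiset.insert_eq_cons, Multiset.mem_cons, Multiset.mem_singleton] at h
              rcases h with rfl | rfl <;> rfl
            · simp at h
      · -- a > 0 : peel off {a, a, -a, -a}
        set q : Multiset ℝ := {a, a, -a, -a} with hq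
        have hane : a ≠ -a := by intro h; linarith
        have hcq : ∀ x : ℝ, q.count x = (if x = a then 2 else 0) + (if x = -a then 2 else 0) := by
          intro x
          simp only [hq, Multiset.insert_eq_cons, Multiset.count_cons, Multiset.count_singleton]
          by_cases h1 : x = a <;> by_cases h2 : x = -a <;>
            simp [h1, h2, hane, Ne.symm hane]
        have hca : 2 ≤ m.count a := by
          have h1 : 0 < m.count a := Multiset.count_pos.mpr ha
          obtain ⟨c, hc⟩ := heven a
          omega
        have hle : q ≤ m := by
          rw [Multiset.le_iff_count]
          intro x
          rw [hcq x]
          by_cases h1 : x = a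
          · have h2 : ¬ x = -a := fun h => hane (h1.symm.trans h)
            subst h1; simpa [h2] using hca
          · by_cases h2 : x = -a
            · subst h2
              have h3 : ¬ (-a) = a := fun h => hane h.symm
              simp only [h3, if_false, if_pos rfl, zero_add]
              rw [hneg a]; exact hca
            · simp [h1, h2]
        set m' := m - q with hm'def
        have hmm : m = m' + q := (tsub_add_cancel_of_le hle).symm
        have hcardq : Multiset.card q = 4 := by simp [hq, Multiset.insert_eq_cons]
        have hn2 : 2 ≤ n := by
          have := Multiset.card_le_card hle
          rw [hcardq, hcard] at this; omega
        have hcard' : Multiset.card m' = 2 * (n - 2) := by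
          rw [hm'def, Multiset.card_sub hle, hcardq, hcard]; omega
        have hcount' : ∀ x : ℝ, m'.count x = m.count x - q.count x := by
          intro x; rw [hm'def, Multiset.count_sub]
        have hqle : ∀ x : ℝ, q.count x ≤ m.count x := Multiset.le_iff_count.mp hle
        have hqneg : ∀ x : ℝ, q.count (-x) = q.count x := by
          intro x
          rw [hcq, hcq]
          have e1 : (-x = a) ↔ (x = -a) := by constructor <;> intro h <;> linarith
          have e2 : (-x = -a) ↔ (x = a) := by constructor <;> intro h <;> linarith
          simp only [e1, e2]; omega
        have hneg' : ∀ x : ℝ, m'.count (-x) = m'.count x := by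
          intro x; rw [hcount', hcount', hneg, hqneg]
        have hqeven : ∀ x : ℝ, Even (q.count x) := by
          intro x; rw [hcq]; split_ifs <;> decide
        have heven' : ∀ x : ℝ, Even (m'.count x) := by
          intro x
          obtain ⟨c, hc⟩ := heven x
          obtain ⟨e, he⟩ := hqeven x
          have := hqle x
          exact ⟨c - e, by rw [hcount' x]; omega⟩
        obtain ⟨d', t', hpar', ht0', hanti', hrep'⟩ := ih (n - 2) (by omega) m' hcard' hneg' heven'
        have htle : ∀ i : Fin d', t' i ≤ a := by
          intro i
          have hmem : t' i ∈ m' := by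
            rw [hrep']
            refine Multiset.mem_add.mpr (Or.inl ?_)
            refine Multiset.mem_bind.mpr ⟨t' i, ?_, ?_⟩
            · exact Multiset.mem_map.mpr ⟨i, Finset.mem_univ_val i, rfl⟩
            · simp [Multiset.insert_eq_cons]
          exact hmax _ (Multiset.mem_of_le tsub_le_self hmem)
        refine ⟨d' + 1, Fin.cons a t', by omega, ?_, ?_, ?_⟩
        · intro i
          refine Fin.cases ?_ ?_ i
          · simpa using ha0
          · intro j; simpa using ht0' j
        · intro i j hij
          rcases Fin.eq_zero_or_eq_succ j with rfl | ⟨j', rfl⟩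
          · have hi : i = 0 := Fin.le_zero_iff.mp hij
            rw [hi]
          · rcases Fin.eq_zero_or_eq_succ i with rfl | ⟨i', rfl⟩
            · rw [Fin.cons_succ, Fin.cons_zero]; exact htle j'
            · rw [Fin.cons_succ, Fin.cons_succ]
              exact hanti' (Fin.succ_le_succ_iff.mp hij)
        · have hiff : (n = 2*(d'+1)+1) ↔ (n - 2 = 2*d'+1) := by omega
          rw [hmm, hrep', if_congr hiff rfl rfl, Fin.univ_succ]
          simp only [Finset.cons_val, Finset.map_val, Multiset.map_cons, Multiset.map_map,
            Multiset.cons_bind, Fin.cons_zero]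
          simp only [Function.Embedding.coeFn_mk]
          have hcomp : (Fin.cons a t' ∘ Fin.succ) = t' := by
            funext k; simp
          rw [hcomp, ← hq]
          abel

/-! ### Auxiliary linear algebra lemmas -/

section MatrixLemmas

variable {ι : Type*} [Fintype ι] [DecidableEq ι]

omit [Fintype ι] in
lemma stmt18_smul_one_diag (μ : ℝ) : (μ • (1 : Matrix ι ι ℝ)) = diagonal (fun _ => μ) :=
  Matrix.smul_one_eq_diagonal μ

/-- count of μ among eigenvalues + rank (A - μ•1) = card ι -/
lemma stmt18_count_add_rank (A : Matrix ι ι ℝ) (hA : A.IsHermitian) (μ : ℝ) :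
    Multiset.count μ (Finset.univ.val.map hA.eigenvalues) + (A - μ • 1).rank
      = Fintype.card ι := by
  classical
  set U : Matrix ι ι ℝ := (hA.eigenvectorUnitary : Matrix ι ι ℝ) with hU
  have hU1 : U * star U = 1 := Matrix.mem_unitaryGroup_iff.mp hA.eigenvectorUnitary.2
  have hU2 : star U * U = 1 := Matrix.mem_unitaryGroup_iff'.mp hA.eigenvectorUnitary.2
  have hdetU : IsUnit U.det := by
    apply IsUnit.of_mul_eq_one (star U).det
    rw [← det_mul, hU1, det_one]
  have hdetsU : IsUnit (star U).det := by
    apply IsUnit.of_mul_eq_one U.det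
    rw [← det_mul, hU2, det_one]
  have hspec : A = U * diagonal hA.eigenvalues * star U := by
    have := hA.spectral_theorem
    simpa [hU] using this
  have hAsub : A - μ • 1 = U * diagonal (fun i => hA.eigenvalues i - μ) * star U := by
    have : diagonal (fun i => hA.eigenvalues i - μ)
        = diagonal hA.eigenvalues - μ • 1 := by
      rw [stmt18_smul_one_diag, diagonal_sub]
    rw [this, mul_sub, sub_mul, ← hspec]
    congr 1
    rw [Matrix.mul_smul, Matrix.smul_mul, mul_one, hU1]
  have hrank : (A - μ • 1).rank = Fintype.card {i // hA.eigenvalues i - μ ≠ 0} := by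
    rw [hAsub, rank_mul_eq_left_of_isUnit_det _ _ hdetsU,
      rank_mul_eq_right_of_isUnit_det _ _ hdetU, rank_diagonal]
  have hcount : Multiset.count μ (Finset.univ.val.map hA.eigenvalues)
      = (Finset.univ.filter (fun i => μ = hA.eigenvalues i)).card := by
    rw [Multiset.count_map]
    rfl
  have hcard2 : Fintype.card {i // hA.eigenvalues i - μ ≠ 0}
      = (Finset.univ.filter (fun i => ¬ (μ = hA.eigenvalues i))).card := by
    rw [Fintype.card_subtype]
    congr 1
    apply Finset.filter_congr
    intro i _
    constructor
    · intro h h'; exact h (by rw [← h']; ring)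
    · intro h h'; exact h (by rw [sub_eq_zero] at h'; exact h'.symm)
  rw [hcount, hrank, hcard2]
  exact Finset.card_filter_add_card_filter_not _

lemma stmt18_even_finrank_ker (B Q : Matrix ι ι ℝ) (hQ2 : Q * Q = -1)
    (hcomm : B * Q = Q * B) :
    Even (Module.finrank ℝ (LinearMap.ker B.mulVecLin)) := by
  set W := LinearMap.ker B.mulVecLin with hW
  have hst : ∀ x ∈ W, Q.mulVecLin x ∈ W := by
    intro x hx
    rw [hW, LinearMap.mem_ker] at hx ⊢
    show B.mulVec (Q.mulVec x) = 0
    rw [Matrix.mulVec_mulVec, hcomm, ← Matrix.mulVec_mulVec]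
    show Q.mulVecLin (B.mulVecLin x) = 0
    rw [hx, map_zero]
  set f : W →ₗ[ℝ] W := LinearMap.restrict Q.mulVecLin hst with hf
  have hff : f ∘ₗ f = -LinearMap.id := by
    apply LinearMap.ext; intro x
    have : Q.mulVec (Q.mulVec x.1) = -x.1 := by
      rw [Matrix.mulVec_mulVec, hQ2, Matrix.neg_mulVec, Matrix.one_mulVec]
    apply Subtype.ext
    simp only [LinearMap.coe_comp, Function.comp_apply, hf, LinearMap.restrict_coe_apply,
      Matrix.mulVecLin_apply, LinearMap.neg_apply, LinearMap.id_coe, id_eq,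
      NegMemClass.coe_neg]
    exact this
  have hdet : (LinearMap.det f) * (LinearMap.det f) = (-1 : ℝ) ^ (Module.finrank ℝ W) := by
    rw [← LinearMap.det_comp, hff]
    have : (-LinearMap.id : W →ₗ[ℝ] W) = (-1 : ℝ) • LinearMap.id := by
      apply LinearMap.ext; intro x
      simp
    rw [this, LinearMap.det_smul, LinearMap.det_id, mul_one]
  rcases Nat.even_or_odd (Module.finrank ℝ W) with h | h
  · exact h
  · exfalso
    rw [h.neg_one_pow] at hdet
    nlinarith [sq_nonneg (LinearMap.det f)]

lemma stmt18_rank_shift_inv (A J : Matrix ι ι ℝ) (hAJA : A * J * A = J) (hJJ : J * J = -1)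
    (hdetA : IsUnit A.det) {μ : ℝ} (hμ : μ ≠ 0) :
    (A - μ⁻¹ • 1).rank = (A - μ • 1).rank := by
  have hdetJ : J.det ≠ 0 := by
    intro h
    have : J.det * J.det = Matrix.det (J * J) := (det_mul _ _).symm
    rw [hJJ, h, mul_zero] at this
    rw [show (-1 : Matrix ι ι ℝ) = -(1 : Matrix ι ι ℝ) from rfl, Matrix.det_neg,
      det_one, mul_one] at this
    rcases Nat.even_or_odd (Fintype.card ι) with he | ho
    · rw [he.neg_one_pow] at this; norm_num at this
    · rw [ho.neg_one_pow] at this; norm_num at this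
  have hdetnJ : IsUnit (-J).det := by
    rw [Matrix.det_neg]
    apply IsUnit.mul
    · rcases Nat.even_or_odd (Fintype.card ι) with he | ho
      · rw [he.neg_one_pow]; exact isUnit_one
      · rw [ho.neg_one_pow]; exact isUnit_one.neg
    · exact isUnit_iff_ne_zero.mpr hdetJ
  have e1 : A * J * (A - μ • (1 : Matrix ι ι ℝ)) = J - μ • (A * J) := by
    rw [mul_sub, hAJA, Matrix.mul_smul, mul_one]
  have e2 : (J - μ • (A * J)) * (-J) = 1 - μ • A := by
    rw [sub_mul, mul_neg, hJJ, neg_neg, Matrix.smul_mul]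
    congr 1
    rw [mul_neg, mul_assoc, hJJ, mul_neg_one, neg_neg]
  have iden : A - μ⁻¹ • (1 : Matrix ι ι ℝ)
      = (((-μ⁻¹) • (A * J)) * (A - μ • 1)) * (-J) := by
    rw [Matrix.smul_mul, Matrix.smul_mul, e1, e2, smul_sub, smul_smul]
    rw [neg_mul, inv_mul_cancel₀ hμ, neg_smul, neg_smul, one_smul, sub_neg_eq_add]
    rw [sub_eq_add_neg, add_comm]
  have hdetC : IsUnit ((((-μ⁻¹) • (A * J)) : Matrix ι ι ℝ)).det := by
    rw [Matrix.det_smul, det_mul]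
    apply IsUnit.mul
    · apply IsUnit.pow
      apply isUnit_iff_ne_zero.mpr
      simp [hμ]
    · exact hdetA.mul (isUnit_iff_ne_zero.mpr hdetJ)
  rw [iden, rank_mul_eq_left_of_isUnit_det _ _ hdetnJ,
    rank_mul_eq_right_of_isUnit_det _ _ hdetC]

end MatrixLemmas

/-- for `M ∈ SpO_N(ℝ)` there exist `t₁ ≥ … ≥ t_d ≥ 0` (with `N = 2d` or
`N = 2d+1`) such that the multiset of singular values of `M` (the square roots of the
eigenvalues of `MᵀM`) is `{e^{t₁}, e^{t₁}, …, e^{t_d}, e^{t_d}, e^{-t₁}, e^{-t₁}, …,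
e^{-t_d}, e^{-t_d}}`, together with `{1, 1}` when `N` is odd: in particular every
singular value has multiplicity at least `2`. -/
theorem stmt18 (N : ℕ) (hN : 1 ≤ N)
    (J S M : Matrix (Fin N ⊕ Fin N) (Fin N ⊕ Fin N) ℝ)
    (hJ : J = Matrix.fromBlocks 0 (-1) 1 0)
    (hS : S = Matrix.fromBlocks
      (Matrix.diagonal fun i : Fin N => (-1 : ℝ) ^ ((i : ℕ) + 1)) 0 0
      (Matrix.diagonal fun i : Fin N => (-1 : ℝ) ^ ((i : ℕ) + 1)))
    (h1 : Mᵀ * J * M = J) (h2 : Mᵀ * S * M = S)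
    (hM : (Mᵀ * M).IsHermitian) :
    ∃ (d : ℕ) (t : Fin d → ℝ), (N = 2 * d ∨ N = 2 * d + 1) ∧
      (∀ i, 0 ≤ t i) ∧ Antitone t ∧
      (Finset.univ.val.map fun i : Fin N ⊕ Fin N => Real.sqrt (hM.eigenvalues i)) =
        ((Finset.univ.val.map t).bind fun a =>
          ({Real.exp a, Real.exp a, Real.exp (-a), Real.exp (-a)} : Multiset ℝ)) +
        (if N = 2 * d + 1 then ({1, 1} : Multiset ℝ) else 0) := by
  classical
  have hcardι : Fintype.card (Fin N ⊕ Fin N) = 2 * N := by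
    rw [Fintype.card_sum, Fintype.card_fin]; omega
  -- basic identities for J and S
  have hJJ : J * J = -1 := by
    rw [hJ, Matrix.fromBlocks_multiply, show (-1 : Matrix (Fin N ⊕ Fin N) (Fin N ⊕ Fin N) ℝ)
      = -(1 : Matrix (Fin N ⊕ Fin N) (Fin N ⊕ Fin N) ℝ) from rfl, ← Matrix.fromBlocks_one,
      Matrix.fromBlocks_neg]
    simp
  have hSS : S * S = 1 := by
    have hK : (Matrix.diagonal fun i : Fin N => (-1:ℝ)^((i:ℕ)+1)) *
        (Matrix.diagonal fun i : Fin N => (-1:ℝ)^((i:ℕ)+1)) = 1 := by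
      rw [Matrix.diagonal_mul_diagonal]
      have hfun : (fun i : Fin N => (-1:ℝ)^((i:ℕ)+1) * (-1:ℝ)^((i:ℕ)+1)) = fun _ => 1 := by
        funext i; rw [← pow_add]; exact Even.neg_one_pow ⟨(i:ℕ)+1, by ring⟩
      rw [hfun, Matrix.diagonal_one]
    rw [hS, Matrix.fromBlocks_multiply]
    simp only [Matrix.mul_zero, Matrix.zero_mul, add_zero, zero_add, hK]
    exact Matrix.fromBlocks_one
  have hST : Sᵀ = S := by
    rw [hS, Matrix.fromBlocks_transpose]
    simp [Matrix.diagonal_transpose]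
  have hJT : Jᵀ = -J := by
    rw [hJ, Matrix.fromBlocks_transpose, Matrix.fromBlocks_neg]
    simp
  have hSJ : S * J = J * S := by
    rw [hS, hJ, Matrix.fromBlocks_multiply, Matrix.fromBlocks_multiply]
    simp
  -- determinant facts
  have hdetJ : J.det ≠ 0 := by
    intro h
    have : J.det * J.det = Matrix.det (J * J) := (det_mul _ _).symm
    rw [hJJ, h, mul_zero, show (-1 : Matrix (Fin N ⊕ Fin N) (Fin N ⊕ Fin N) ℝ)
      = -(1 : Matrix (Fin N ⊕ Fin N) (Fin N ⊕ Fin N) ℝ) from rfl, Matrix.det_neg,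
      det_one, mul_one, hcardι, Even.neg_one_pow ⟨N, by ring⟩] at this
    norm_num at this
  have hdetM2 : M.det * M.det = 1 := by
    have hcongr := congrArg Matrix.det h1
    rw [det_mul, det_mul, det_transpose] at hcongr
    have hz : (M.det * M.det - 1) * J.det = 0 := by linear_combination hcongr
    rcases mul_eq_zero.mp hz with h | h
    · linarith [sub_eq_zero.mp h]
    · exact absurd h hdetJ
  have hdetM : IsUnit M.det := by
    apply isUnit_iff_ne_zero.mpr
    intro h; rw [h, mul_zero] at hdetM2; norm_num at hdetM2
  have hdetA : IsUnit (Mᵀ * M).det := by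
    rw [det_mul, det_transpose, hdetM2]; exact isUnit_one
  -- inverse identities
  have hinv1 : ((-J) * (Mᵀ * J)) * M = 1 := by
    rw [mul_assoc, h1, neg_mul, hJJ, neg_neg]
  have hMleft : M⁻¹ = (-J) * (Mᵀ * J) := Matrix.inv_eq_left_inv hinv1
  have hinv2 : ((S * (Mᵀ * S)) * M) = 1 := by
    rw [mul_assoc, h2, hSS]
  have hMleft2 : M⁻¹ = S * (Mᵀ * S) := Matrix.inv_eq_left_inv hinv2
  have heq : (-J) * (Mᵀ * J) = S * (Mᵀ * S) := by rw [← hMleft, hMleft2]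
  -- Mᵀ commutes with Q = J * S
  have hQMT : Mᵀ * (J * S) = (J * S) * Mᵀ := by
    have h := congrArg (fun X => J * X * S) heq
    simp only [mul_assoc] at h
    -- h : J * (-J * (Mᵀ * (J * S))) = J * (S * (Mᵀ * (S * S)))
    rw [hSS, mul_one, ← mul_assoc J (-J), mul_neg, hJJ, neg_neg, one_mul,
      ← mul_assoc J S Mᵀ] at h
    exact h
  have hQM : M * (J * S) = (J * S) * M := by
    have h := congrArg Matrix.transpose hQMT
    have hT : (J * S)ᵀ = -(J * S) := by
      rw [Matrix.transpose_mul, hST, hJT, mul_neg, hSJ]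
    rw [Matrix.transpose_mul Mᵀ (J*S), Matrix.transpose_mul (J*S) Mᵀ,
      Matrix.transpose_transpose, hT, neg_mul, mul_neg] at h
    exact (neg_inj.mp h).symm
  have hQQ : (J * S) * (J * S) = -1 := by
    rw [mul_assoc J S (J*S), ← mul_assoc S J S, hSJ, mul_assoc J S S, hSS, mul_one, hJJ]
  have hAQ : (Mᵀ * M) * (J * S) = (J * S) * (Mᵀ * M) := by
    calc (Mᵀ*M)*(J*S) = Mᵀ*(M*(J*S)) := by rw [mul_assoc]
    _ = Mᵀ*((J*S)*M) := by rw [hQM]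
    _ = (Mᵀ*(J*S))*M := by rw [← mul_assoc]
    _ = ((J*S)*Mᵀ)*M := by rw [hQMT]
    _ = (J*S)*(Mᵀ*M) := by rw [mul_assoc (J*S) Mᵀ M]
  -- M J Mᵀ = J and A J A = J
  have hright : M * M⁻¹ = 1 := Matrix.mul_nonsing_inv M hdetM
  have hMJM : M * ((-J) * (Mᵀ * J)) = 1 := by rw [← hMleft]; exact hright
  have hXJ : (M * (-J * Mᵀ)) * J = 1 := by
    rw [mul_assoc, mul_assoc]; rw [← mul_assoc (-J) Mᵀ J]
    rw [show -J * Mᵀ * J = (-J) * (Mᵀ * J) by rw [mul_assoc]]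
    exact hMJM
  have hMJT : M * (J * Mᵀ) = J := by
    have h := congrArg (fun X => X * (-J)) hXJ
    rw [mul_assoc, mul_neg, hJJ, neg_neg, mul_one, one_mul] at h
    -- h : M * (-J * Mᵀ) = -J
    rw [neg_mul, mul_neg] at h
    have := neg_inj.mp h
    rwa [← mul_assoc, mul_assoc] at this
  have hAJA : (Mᵀ * M) * J * (Mᵀ * M) = J := by
    rw [show (Mᵀ * M) * J * (Mᵀ * M) = Mᵀ * ((M * (J * Mᵀ)) * M) by simp only [mul_assoc],
      hMJT, ← mul_assoc, h1]
  -- eigenvalues are positive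
  have hpos : ∀ i, 0 < hM.eigenvalues i := by
    have hsemi : (Mᵀ * M).PosSemidef := by
      rw [← Matrix.conjTranspose_eq_transpose_of_trivial]
      exact Matrix.posSemidef_conjTranspose_mul_self M
    intro i
    rcases (hsemi.eigenvalues_nonneg i).lt_or_eq with h | h
    · exact h
    · exfalso
      have hdet0 : (Mᵀ * M).det = ∏ j, hM.eigenvalues j := by
        have := hM.det_eq_prod_eigenvalues
        simpa using this
      have : (Mᵀ * M).det = 0 := by
        rw [hdet0]
        exact Finset.prod_eq_zero (Finset.mem_univ i) h.symm
      rw [this] at hdetA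
      exact (by norm_num : ¬ IsUnit (0:ℝ)) hdetA
  -- the eigenvalue multiset
  set E : Multiset ℝ := Finset.univ.val.map hM.eigenvalues with hE
  have heven : ∀ μ : ℝ, Even (Multiset.count μ E) := by
    intro μ
    have h1r := stmt18_count_add_rank (Mᵀ * M) hM μ
    rw [← hE] at h1r
    have h2r : ((Mᵀ * M) - μ • 1).rank
        + Module.finrank ℝ (LinearMap.ker ((Mᵀ * M) - μ • 1).mulVecLin)
        = Fintype.card (Fin N ⊕ Fin N) := by
      have h := LinearMap.finrank_range_add_finrank_ker ((Mᵀ * M) - μ • 1).mulVecLin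
      rw [Module.finrank_fintype_fun_eq_card] at h
      rw [Matrix.rank]
      exact h
    have hcm : ((Mᵀ * M) - μ • 1) * (J * S) = (J * S) * ((Mᵀ * M) - μ • 1) := by
      rw [sub_mul, mul_sub, hAQ, Matrix.smul_mul, Matrix.mul_smul, one_mul, mul_one]
    have hev := stmt18_even_finrank_ker ((Mᵀ * M) - μ • 1) (J * S) hQQ hcm
    have : Multiset.count μ E
        = Module.finrank ℝ (LinearMap.ker ((Mᵀ * M) - μ • 1).mulVecLin) := by omega
    rw [this]; exact hev
  have hInv : ∀ μ : ℝ, μ ≠ 0 → Multiset.count μ⁻¹ E = Multiset.count μ E := by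
    intro μ hμ
    have hr := stmt18_rank_shift_inv (Mᵀ * M) J hAJA hJJ hdetA hμ
    have c1 := stmt18_count_add_rank (Mᵀ * M) hM μ
    have c2 := stmt18_count_add_rank (Mᵀ * M) hM μ⁻¹
    rw [← hE] at c1 c2
    omega
  -- pass to logarithms
  set m : Multiset ℝ := E.map (fun x => Real.log x / 2) with hm
  have hEpos : ∀ x ∈ E, (0:ℝ) < x := by
    intro x hx
    obtain ⟨i, _, rfl⟩ := Multiset.mem_map.mp hx
    exact hpos i
  have hmc : ∀ x : ℝ, m.count x = E.count (Real.exp (2*x)) := by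
    intro x
    rw [hm, Multiset.count_map, Multiset.count_eq_card_filter_eq]
    congr 1
    apply Multiset.filter_congr
    intro a ha
    constructor
    · rintro rfl
      rw [show 2*(Real.log a/2) = Real.log a by ring, Real.exp_log (hEpos a ha)]
    · intro h
      rw [← h, Real.log_exp]; ring
  have hmneg : ∀ x : ℝ, m.count (-x) = m.count x := by
    intro x
    rw [hmc, hmc]
    rw [show (2:ℝ)*(-x) = -(2*x) by ring, Real.exp_neg]
    exact hInv _ (Real.exp_ne_zero _)
  have hmeven : ∀ x : ℝ, Even (m.count x) := fun x => by rw [hmc]; exact heven _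
  have hmcard : Multiset.card m = 2 * N := by
    rw [hm, Multiset.card_map, hE, Multiset.card_map]
    simpa using hcardι
  obtain ⟨d, t, hd, ht0, hanti, hrep⟩ := stmt18_key N m hmcard hmneg hmeven
  refine ⟨d, t, hd, ht0, hanti, ?_⟩
  have hLHS : (Finset.univ.val.map fun i : Fin N ⊕ Fin N => Real.sqrt (hM.eigenvalues i))
      = m.map Real.exp := by
    rw [hm, hE, Multiset.map_map, Multiset.map_map]
    apply Multiset.map_congr rfl
    intro i _
    show Real.sqrt (hM.eigenvalues i) = Real.exp (Real.log (hM.eigenvalues i)/2)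
    rw [← Real.log_sqrt (hpos i).le, Real.exp_log (Real.sqrt_pos.mpr (hpos i))]
  rw [hLHS, hrep, Multiset.map_add]
  congr 1
  · rw [Multiset.map_bind]
    apply Multiset.bind_congr
    intro a _
    simp [Multiset.insert_eq_cons]
  · split_ifs
    · simp [Multiset.insert_eq_cons, Real.exp_zero]
    · simp

end
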